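/- Let M be an imprimitivity Hilbert C*-bimodule over commutative unital C*-algebras A and B. Then the canonical homomorphism φ_M: A → B, defined by φ_M(a) = Σⱼ⟨wⱼ, a·zⱼ⟩_B for any finite families with Σⱼ⟨wⱼ,zⱼ⟩_B = 1_B, is an isomorphism of C*-algebras, with inverse ψ_M: B → A defined by ψ_M(b) = Σᵢ⟨tᵢ·b, uᵢ⟩_A for any finite families with Σᵢ⟨tᵢ,uᵢ⟩_A = 1_A. -/

import Mathlib

/-- A pre-Hilbert C*-bimodule `M` over unital C*-algebras `A` (on the left) and
`B` (on the right): a left pre-Hilbert C*-module over `A` (inner product `innerL`,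
`A`-linear in the first variable) and a right pre-Hilbert C*-module over `B`
(inner product `innerR`, `B`-linear in the second variable), with compatible
actions. -/
structure PreHilbertBimodule (A B M : Type*) [CStarAlgebra A] [CStarAlgebra B]
    [AddCommGroup M] [Module ℂ M] where
  lsmul : A → M → M
  rsmul : M → B → M
  innerL : M → M → A
  innerR : M → M → B
  lsmul_dist : ∀ a x y, lsmul a (x + y) = lsmul a x + lsmul a y
  add_lsmul : ∀ a b x, lsmul (a + b) x = lsmul a x + lsmul b x
  mul_lsmul : ∀ a b x, lsmul (a * b) x = lsmul a (lsmul b x)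
  one_lsmul : ∀ x, lsmul 1 x = x
  lsmul_csmul : ∀ (c : ℂ) a x, lsmul a (c • x) = c • lsmul a x
  csmul_lsmul : ∀ (c : ℂ) a x, lsmul (c • a) x = c • lsmul a x
  rsmul_dist : ∀ x y b, rsmul (x + y) b = rsmul x b + rsmul y b
  rsmul_add : ∀ x a b, rsmul x (a + b) = rsmul x a + rsmul x b
  rsmul_mul : ∀ x a b, rsmul (rsmul x a) b = rsmul x (a * b)
  rsmul_one : ∀ x, rsmul x 1 = x
  rsmul_csmul : ∀ (c : ℂ) x b, rsmul (c • x) b = c • rsmul x b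
  rsmul_calg : ∀ (c : ℂ) x b, rsmul x (c • b) = c • rsmul x b
  lsmul_rsmul : ∀ a x b, lsmul a (rsmul x b) = rsmul (lsmul a x) b
  innerR_add_right : ∀ x y z, innerR x (y + z) = innerR x y + innerR x z
  innerR_rsmul_right : ∀ x y b, innerR x (rsmul y b) = innerR x y * b
  innerR_conj_symm : ∀ x y, innerR y x = star (innerR x y)
  innerR_csmul_right : ∀ (c : ℂ) x y, innerR x (c • y) = c • innerR x y
  innerR_self_pos : ∀ x, ∃ b, innerR x x = star b * b
  innerR_self_definite : ∀ x, innerR x x = 0 → x = 0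
  innerL_add_left : ∀ x y z, innerL (x + y) z = innerL x z + innerL y z
  innerL_lsmul_left : ∀ a x y, innerL (lsmul a x) y = a * innerL x y
  innerL_conj_symm : ∀ x y, innerL y x = star (innerL x y)
  innerL_csmul_left : ∀ (c : ℂ) x y, innerL (c • x) y = c • innerL x y
  innerL_self_pos : ∀ x, ∃ a, innerL x x = star a * a
  innerL_self_definite : ∀ x, innerL x x = 0 → x = 0
  innerR_lsmul : ∀ a x y, innerR x (lsmul a y) = innerR (lsmul (star a) x) y
  innerL_rsmul : ∀ x y b, innerL (rsmul x b) y = innerL x (rsmul y (star b))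

/-- An imprimitivity (equivalence) Hilbert C*-bimodule over `A` and `B`: a
pre-Hilbert C*-bimodule that is full as a left and as a right Hilbert C*-module,
satisfies the imprimitivity condition `⟨x,y⟩_A·z = x·⟨y,z⟩_B`, and is complete
(for the common norm induced by the inner products). -/
structure ImprimitivityBimodule (A B M : Type*) [CStarAlgebra A] [CStarAlgebra B]
    [AddCommGroup M] [Module ℂ M] extends PreHilbertBimodule A B M where
  imprimitivity : ∀ x y z, lsmul (innerL x y) z = rsmul x (innerR y z)
  fullL : closure (Submodule.span ℂ {a : A | ∃ x y : M, a = innerL x y} : Set A)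
      = Set.univ
  fullR : closure (Submodule.span ℂ {b : B | ∃ x y : M, b = innerR x y} : Set B)
      = Set.univ
  complete : ∀ f : ℕ → M,
    (∀ ε > 0, ∃ N, ∀ m ≥ N, ∀ n ≥ N,
      ‖innerR (f m - f n) (f m - f n)‖ < ε) →
    ∃ x, ∀ ε > 0, ∃ N, ∀ n ≥ N, ‖innerR (f n - x) (f n - x)‖ < ε

namespace PreHilbertBimodule

variable {A B M : Type*} [CStarAlgebra A] [CStarAlgebra B]
    [AddCommGroup M] [Module ℂ M] (H : PreHilbertBimodule A B M)

lemma rsmul_zero (x : M) : H.rsmul x 0 = 0 := by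
  simpa using H.rsmul_calg 0 x 0

lemma zero_lsmul (x : M) : H.lsmul 0 x = 0 := by
  simpa using H.csmul_lsmul 0 0 x

lemma innerR_zero_right (x : M) : H.innerR x 0 = 0 := by
  simpa using H.innerR_csmul_right 0 x 0

lemma innerL_zero_left (y : M) : H.innerL 0 y = 0 := by
  simpa using H.innerL_csmul_left 0 0 y

lemma rsmul_sum {ι : Type*} (x : M) (s : Finset ι) (f : ι → B) :
    H.rsmul x (∑ j ∈ s, f j) = ∑ j ∈ s, H.rsmul x (f j) := by
  classical
  induction s using Finset.induction with
  | empty => simp [H.rsmul_zero]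
  | insert _ _ h ih => rw [Finset.sum_insert h, Finset.sum_insert h, H.rsmul_add, ih]

lemma sum_lsmul {ι : Type*} (x : M) (s : Finset ι) (f : ι → A) :
    H.lsmul (∑ j ∈ s, f j) x = ∑ j ∈ s, H.lsmul (f j) x := by
  classical
  induction s using Finset.induction with
  | empty => simp [H.zero_lsmul]
  | insert _ _ h ih => rw [Finset.sum_insert h, Finset.sum_insert h, H.add_lsmul, ih]

lemma innerR_sum_right {ι : Type*} (x : M) (s : Finset ι) (f : ι → M) :
    H.innerR x (∑ j ∈ s, f j) = ∑ j ∈ s, H.innerR x (f j) := by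
  classical
  induction s using Finset.induction with
  | empty => simp [H.innerR_zero_right]
  | insert _ _ h ih =>
      rw [Finset.sum_insert h, Finset.sum_insert h, H.innerR_add_right, ih]

lemma innerL_sum_left {ι : Type*} (y : M) (s : Finset ι) (f : ι → M) :
    H.innerL (∑ j ∈ s, f j) y = ∑ j ∈ s, H.innerL (f j) y := by
  classical
  induction s using Finset.induction with
  | empty => simp [H.innerL_zero_left]
  | insert _ _ h ih =>
      rw [Finset.sum_insert h, Finset.sum_insert h, H.innerL_add_left, ih]

end PreHilbertBimodule

/-- For an imprimitivity Hilbert C*-bimodule `M` over commutative unital C*-algebras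
`A` and `B`, the canonical homomorphism `φ_M(a) = Σⱼ⟨wⱼ, a·zⱼ⟩_B` (for any finite
family with `Σⱼ⟨wⱼ,zⱼ⟩_B = 1_B`) is an isomorphism of C*-algebras, with inverse
`ψ_M(b) = Σᵢ⟨tᵢ·b, uᵢ⟩_A` (for any finite family with `Σᵢ⟨tᵢ,uᵢ⟩_A = 1_A`). -/


theorem canonical_map_isomorphism
    {A B M : Type*} [CommCStarAlgebra A] [CommCStarAlgebra B]
    [AddCommGroup M] [Module ℂ M]
    (H : ImprimitivityBimodule A B M)
    {n m : ℕ} (w z : Fin n → M) (t u : Fin m → M)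
    (hwz : (∑ j, H.innerR (w j) (z j)) = 1)
    (htu : (∑ i, H.innerL (t i) (u i)) = 1)
    (φ : A → B) (hφ : ∀ a, φ a = ∑ j, H.innerR (w j) (H.lsmul a (z j)))
    (ψ : B → A) (hψ : ∀ b, ψ b = ∑ i, H.innerL (H.rsmul (t i) b) (u i)) :
    (∀ a : A, ψ (φ a) = a) ∧ (∀ b : B, φ (ψ b) = b) := by
  set K := H.toPreHilbertBimodule with hK
  constructor
  · intro a
    rw [hψ, hφ]
    have key : ∀ i : Fin m,
        K.innerL (K.rsmul (t i) (∑ j, K.innerR (w j) (K.lsmul a (z j)))) (u i)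
          = a * K.innerL (t i) (u i) := by
      intro i
      calc K.innerL (K.rsmul (t i) (∑ j, K.innerR (w j) (K.lsmul a (z j)))) (u i)
          = ∑ j, (K.innerL (t i) (w j) * a) * K.innerL (z j) (u i) := by
            rw [K.rsmul_sum, K.innerL_sum_left]
            refine Finset.sum_congr rfl fun j _ => ?_
            rw [← H.imprimitivity, ← K.mul_lsmul, K.innerL_lsmul_left]
        _ = a * ∑ j, K.innerL (t i) (w j) * K.innerL (z j) (u i) := by
            rw [Finset.mul_sum]
            exact Finset.sum_congr rfl fun j _ => by ring
        _ = a * K.innerL (K.rsmul (t i) (∑ j, K.innerR (w j) (z j))) (u i) := by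
            rw [K.rsmul_sum, K.innerL_sum_left]
            congr 1
            refine Finset.sum_congr rfl fun j _ => ?_
            rw [← H.imprimitivity, K.innerL_lsmul_left]
        _ = a * K.innerL (t i) (u i) := by rw [hwz, K.rsmul_one]
    calc (∑ i, K.innerL (K.rsmul (t i) (∑ j, K.innerR (w j) (K.lsmul a (z j)))) (u i))
        = ∑ i, a * K.innerL (t i) (u i) := Finset.sum_congr rfl fun i _ => key i
      _ = a := by rw [← Finset.mul_sum, htu, mul_one]
  · intro b
    rw [hφ, hψ]
    have key : ∀ j : Fin n,
        K.innerR (w j) (K.lsmul (∑ i, K.innerL (K.rsmul (t i) b) (u i)) (z j))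
          = b * K.innerR (w j) (z j) := by
      intro j
      calc K.innerR (w j) (K.lsmul (∑ i, K.innerL (K.rsmul (t i) b) (u i)) (z j))
          = ∑ i, (K.innerR (w j) (t i) * (b * K.innerR (u i) (z j))) := by
            rw [K.sum_lsmul, K.innerR_sum_right]
            refine Finset.sum_congr rfl fun i _ => ?_
            rw [H.imprimitivity, K.rsmul_mul, K.innerR_rsmul_right]
        _ = b * ∑ i, K.innerR (w j) (t i) * K.innerR (u i) (z j) := by
            rw [Finset.mul_sum]
            exact Finset.sum_congr rfl fun i _ => by ring
        _ = b * K.innerR (w j) (K.lsmul (∑ i, K.innerL (t i) (u i)) (z j)) := by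
            rw [K.sum_lsmul, K.innerR_sum_right]
            congr 1
            refine Finset.sum_congr rfl fun i _ => ?_
            rw [H.imprimitivity, K.innerR_rsmul_right]
        _ = b * K.innerR (w j) (z j) := by rw [htu, K.one_lsmul]
    calc (∑ j, K.innerR (w j) (K.lsmul (∑ i, K.innerL (K.rsmul (t i) b) (u i)) (z j)))
        = ∑ j, b * K.innerR (w j) (z j) := Finset.sum_congr rfl fun j _ => key j
      _ = b := by rw [← Finset.mul_sum, hwz, mul_one]
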